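/- For all integers n, k, q with q ≥ 2 and 2 ≤ k < n/2, the inequality q^{k(k-1)} · [n-k-1 choose k-1]_q > q^{n-1-k} · [n-2 choose k-2]_q holds, where [a choose b]_q denotes the Gaussian binomial coefficient. -/

import Mathlib

open Finset

/-- The Gaussian binomial coefficient `[a choose b]_q`, defined via the
`q`-Pascal recurrence `[a+1, b+1]_q = [a, b]_q + q^(b+1) * [a, b+1]_q`. -/
def gaussBinom (q : ℕ) : ℕ → ℕ → ℕ
  | _, 0 => 1
  | 0, _ + 1 => 0
  | a + 1, b + 1 => gaussBinom q a b + q ^ (b + 1) * gaussBinom q a (b + 1)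


lemma gaussBinom_zero (q a : ℕ) : gaussBinom q a 0 = 1 := by cases a <;> rfl

lemma gaussBinom_eq_zero (q : ℕ) : ∀ a b, a < b → gaussBinom q a b = 0
  | 0, _+1, _ => rfl
  | a+1, b+1, h => by
      rw [gaussBinom, gaussBinom_eq_zero q a b (by omega),
        gaussBinom_eq_zero q a (b+1) (by omega)]
      ring

lemma D_pos (q : ℕ) (hq : 2 ≤ q) (b : ℕ) :
    0 < ∏ i ∈ range b, ((q : ℚ) ^ (i + 1) - 1) := by
  apply prod_pos
  intro i _
  have : (2:ℚ) ≤ (q:ℚ) := by exact_mod_cast hq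
  have h1 : (2:ℚ) ≤ (q:ℚ) ^ (i+1) := by
    calc (2:ℚ) ≤ (q:ℚ) := this
    _ = (q:ℚ)^1 := (pow_one _).symm
    _ ≤ (q:ℚ)^(i+1) := pow_le_pow_right₀ (by linarith) (by omega)
  linarith

lemma gauss_prod (q : ℕ) (hq : 2 ≤ q) : ∀ a m b, a = m + b →
    (gaussBinom q a b : ℚ) * ∏ i ∈ range b, ((q:ℚ)^(i+1) - 1)
      = ∏ i ∈ range b, ((q:ℚ)^(m+i+1) - 1) := by
  intro a
  induction a with
  | zero =>
    intro m b h
    obtain ⟨rfl, rfl⟩ : m = 0 ∧ b = 0 := by omega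
    simp [gaussBinom_zero]
  | succ a ih =>
    intro m b h
    match b, h with
    | 0, h => simp [gaussBinom_zero]
    | b+1, h =>
      rw [gaussBinom]
      push_cast
      match m, h with
      | 0, h =>
        have hab : a = b := by omega
        subst hab
        rw [gaussBinom_eq_zero q a (a+1) (by omega)]
        have h1 := ih 0 a (by omega)
        have hD : (0:ℚ) < ∏ i ∈ range a, ((q:ℚ)^(i+1) - 1) := D_pos q hq a
        have hG : (gaussBinom q a a : ℚ) = 1 := by
          have : (gaussBinom q a a : ℚ) * ∏ i ∈ range a, ((q:ℚ)^(i+1) - 1)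
              = 1 * ∏ i ∈ range a, ((q:ℚ)^(i+1) - 1) := by
            rw [h1, one_mul]
            apply prod_congr rfl
            intro i _
            norm_num
          exact mul_right_cancel₀ (ne_of_gt hD) this
        rw [hG]
        simp only [zero_add]
        ring
      | m''+1, h =>
        have ha : a = (m''+1) + b := by omega
        have ha2 : a = m'' + (b+1) := by omega
        have ih1 := ih (m''+1) b ha
        have ih2 := ih m'' (b+1) ha2
        rw [prod_range_succ ((fun i => (q:ℚ)^(i+1) - 1)) b,
            prod_range_succ (fun i => (q:ℚ)^(m''+1+i+1) - 1) b]
        rw [prod_range_succ' (fun i => (q:ℚ)^(m''+i+1) - 1) b] at ih2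
        -- ih2 : G a (b+1) * D (b+1) = (∏ i ∈ range b, (q^(m''+i+1+1)-1)) * (q^(m''+0+1)-1)
        have e1 : ∀ i, m'' + (i+1) + 1 = m'' + 1 + i + 1 := by intro i; ring
        simp only [e1] at ih2
        rw [prod_range_succ ((fun i => (q:ℚ)^(i+1) - 1)) b] at ih2
        -- now express goal
        set X := ∏ i ∈ range b, ((q:ℚ)^(m''+1+i+1) - 1) with hX
        set Db := ∏ i ∈ range b, ((q:ℚ)^(i+1) - 1) with hDb
        -- ih1 : G a b * Db = X
        -- ih2 : G a (b+1) * (Db * (q^(b+1)-1)) = X * (q^(m''+1)-1)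
        -- goal : (G a b + q^(b+1) * G a (b+1)) * (Db * (q^(b+1)-1)) = X * (q^(m''+1+b+1)-1)
        have hpow : (q:ℚ)^(m''+1+b+1) = (q:ℚ)^(m''+1) * (q:ℚ)^(b+1) := by
          rw [← pow_add]; ring_nf
        simp only [add_zero] at ih2
        linear_combination ((q:ℚ)^(b+1)-1) * ih1 + (q:ℚ)^(b+1) * ih2 + X * hpow


lemma lemA (Q : ℚ) (hQ : 2 ≤ Q) (t : ℕ) :
    (Q^t * (Q-1) + 1) * ∏ i ∈ range t, Q^(i+2)
      ≤ Q^(t+1) * (Q-1) * ∏ i ∈ range t, (Q^(i+2) - 1) := by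
  induction t with
  | zero => simp; nlinarith
  | succ t ih =>
    rw [prod_range_succ, prod_range_succ]
    have hx : (1:ℚ) ≤ Q^t := one_le_pow₀ (by linarith)
    have hPQ : (0:ℚ) ≤ ∏ i ∈ range t, Q^(i+2) := by positivity
    have hPN : (0:ℚ) ≤ ∏ i ∈ range t, (Q^(i+2) - 1) := by
      apply prod_nonneg; intro i _
      have : (1:ℚ) ≤ Q^(i+2) := one_le_pow₀ (by linarith)
      linarith
    have e1 : Q^(t+1) = Q^t * Q := pow_succ Q t
    have e2 : Q^(t+2) = Q^t * Q^2 := by rw [pow_add]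
    have e3 : Q^(t+3) = Q^t * Q^3 := by rw [pow_add]
    have key : (Q^(t+1)*(Q-1)+1) * Q^(t+2) ≤ Q * (Q^t*(Q-1)+1) * (Q^(t+2)-1) := by
      rw [e1, e2]
      have h1 : (1:ℚ) ≤ Q^t * (Q-1)^2 := by nlinarith [hx, hQ]
      have h2 : Q * (Q^t*(Q-1)+1) * (Q^t*Q^2-1) - (Q^t*Q*(Q-1)+1) * (Q^t*Q^2)
          = Q * (Q^t*(Q-1)^2 - 1) := by ring
      nlinarith [h1, h2, hQ]
    calc (Q^(t+1)*(Q-1)+1) * ((∏ i ∈ range t, Q^(i+2)) * Q^(t+2))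
        ≤ Q * (Q^t*(Q-1)+1) * (Q^(t+2)-1) * ∏ i ∈ range t, Q^(i+2) := by nlinarith [key, hPQ]
      _ = Q * (Q^(t+2)-1) * ((Q^t*(Q-1)+1) * ∏ i ∈ range t, Q^(i+2)) := by ring
      _ ≤ Q * (Q^(t+2)-1) * (Q^(t+1) * (Q-1) * ∏ i ∈ range t, (Q^(i+2) - 1)) := by
          apply mul_le_mul_of_nonneg_left ih
          have : (1:ℚ) ≤ Q^(t+2) := one_le_pow₀ (by linarith)
          nlinarith
      _ = Q^(t+2) * (Q-1) * ((∏ i ∈ range t, (Q^(i+2)-1)) * (Q^(t+2)-1)) := by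
          rw [e1]; ring

lemma F3 (Q : ℚ) (hQ : 2 ≤ Q) (t : ℕ) :
    ∏ i ∈ range t, Q^(i+2) < Q * ∏ i ∈ range t, (Q^(i+2) - 1) := by
  have hA := lemA Q hQ t
  have hx : (0:ℚ) < Q^t := by positivity
  have hPQ : (0:ℚ) < ∏ i ∈ range t, Q^(i+2) := by positivity
  -- (Q^t(Q-1)) * ∏Q < (Q^t(Q-1)+1) ∏Q ≤ Q^{t+1}(Q-1) ∏N = Q^t(Q-1) * (Q ∏N)
  have h1 : Q^t * (Q-1) * ∏ i ∈ range t, Q^(i+2)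
      < Q^t * (Q-1) * (Q * ∏ i ∈ range t, (Q^(i+2) - 1)) := by
    have : Q^(t+1) * (Q-1) * ∏ i ∈ range t, (Q^(i+2) - 1)
        = Q^t * (Q-1) * (Q * ∏ i ∈ range t, (Q^(i+2) - 1)) := by
      rw [pow_succ]; ring
    nlinarith [hA, hPQ]
  have hpos : (0:ℚ) < Q^t * (Q-1) := by nlinarith
  exact lt_of_mul_lt_mul_left h1 (le_of_lt hpos)



lemma final (Q : ℚ) (hQ : 2 ≤ Q) (t m' : ℕ) :
    Q^(m'+t+2) * (Q^(t+1)-1) * ∏ i ∈ range t, (Q^(m'+t+i+4)-1)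
      < Q^((t+2)*(t+1)) * ∏ i ∈ range (t+1), (Q^(m'+i+2)-1) := by
  have hQ0 : (0:ℚ) < Q := by linarith
  have hpow1 : ∀ n : ℕ, 1 ≤ n → (1:ℚ) ≤ Q^n - 1 := by
    intro n hn
    have : Q ≤ Q^n := by
      calc Q = Q^1 := (pow_one Q).symm
      _ ≤ Q^n := pow_le_pow_right₀ (by linarith) hn
    linarith
  set B := ∏ i ∈ range t, (Q^(m'+t+i+4) - Q^(t+2)) with hBdef
  set C := ∏ i ∈ range t, (Q^(m'+t+i+4) - 1) with hCdef
  set N := ∏ i ∈ range t, (Q^(i+2) - 1) with hNdef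
  have hN0 : 0 < N := by
    apply prod_pos; intro i _; have := hpow1 (i+2) (by omega); linarith
  have hB0 : 0 < B := by
    apply prod_pos; intro i _
    have e : Q^(m'+t+i+4) - Q^(t+2) = Q^(t+2) * (Q^(m'+i+2) - 1) := by
      rw [mul_sub, ← pow_add]; ring_nf
    rw [e]
    have := hpow1 (m'+i+2) (by omega)
    positivity
  have hC0 : 0 ≤ C := by
    apply prod_nonneg; intro i _; have := hpow1 (m'+t+i+4) (by omega); linarith
  -- RHS rewrite
  have hRHS : Q^((t+2)*(t+1)) * ∏ i ∈ range (t+1), (Q^(m'+i+2)-1)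
      = Q * (Q^(t+1) * (Q^(m'+t+2)-1)) * B := by
    rw [prod_range_succ]
    have hB : B = ∏ i ∈ range t, Q^(t+2) * (Q^(m'+i+2) - 1) := by
      apply prod_congr rfl; intro i _
      rw [mul_sub, ← pow_add]; ring_nf
    rw [hB, prod_mul_distrib, prod_const, card_range, ← pow_mul,
        show (t+2)*(t+1) = 1 + (t+1) + (t+2)*t by ring, pow_add, pow_add, pow_one]
    ring
  rw [hRHS]
  -- F2 : C < Q * B
  have hF2 : C < Q * B := by
    have hper : ∀ i ∈ range t, 0 ≤ (Q^(i+2)-1) * (Q^(m'+t+i+4)-1) ∧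
        (Q^(i+2)-1) * (Q^(m'+t+i+4)-1) ≤ Q^(i+2) * (Q^(m'+t+i+4) - Q^(t+2)) := by
      intro i _
      have h1 := hpow1 (i+2) (by omega)
      have h2 := hpow1 (m'+t+i+4) (by omega)
      constructor
      · nlinarith
      · have key : Q^(t+i+4) ≤ Q^(i+2) + Q^(m'+t+i+4) - 1 := by
          have : Q^(t+i+4) ≤ Q^(m'+t+i+4) := pow_le_pow_right₀ (by linarith) (by omega)
          have : (1:ℚ) ≤ Q^(i+2) := by linarith
          linarith [pow_le_pow_right₀ (show (1:ℚ) ≤ Q by linarith) (show t+i+4 ≤ m'+t+i+4 by omega)]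
        have e : Q^(i+2) * (Q^(m'+t+i+4) - Q^(t+2)) - (Q^(i+2)-1) * (Q^(m'+t+i+4)-1)
            = Q^(i+2) + Q^(m'+t+i+4) - 1 - Q^(t+i+4) := by
          rw [show Q^(t+i+4) = Q^(i+2) * Q^(t+2) by rw [← pow_add]; ring_nf,
              show Q^(m'+t+i+4) = Q^(m'+t+i+4) from rfl]
          ring
        linarith
    have step1 : N * C ≤ (∏ i ∈ range t, Q^(i+2)) * B := by
      rw [hNdef, hCdef, hBdef, ← prod_mul_distrib, ← prod_mul_distrib]
      apply prod_le_prod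
      · intro i hi; exact (hper i hi).1
      · intro i hi; exact (hper i hi).2
    have step2 : (∏ i ∈ range t, Q^(i+2)) * B < (Q * N) * B :=
      mul_lt_mul_of_pos_right (F3 Q hQ t) hB0
    have : N * C < N * (Q * B) := by nlinarith [step1, step2]
    exact lt_of_mul_lt_mul_left this (le_of_lt hN0)
  -- F1
  have hF1 : Q^(m'+t+2) * (Q^(t+1)-1) ≤ Q^(t+1) * (Q^(m'+t+2)-1) := by
    have : Q^(t+1) ≤ Q^(m'+t+2) := pow_le_pow_right₀ (by linarith) (by omega)
    have e : Q^(t+1) * (Q^(m'+t+2)-1) - Q^(m'+t+2) * (Q^(t+1)-1) = Q^(m'+t+2) - Q^(t+1) := by ring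
    linarith
  have ha2 : 0 < Q^(m'+t+2) * (Q^(t+1)-1) := by
    have := hpow1 (t+1) (by omega); positivity
  calc Q^(m'+t+2) * (Q^(t+1)-1) * C
      < Q^(m'+t+2) * (Q^(t+1)-1) * (Q * B) := mul_lt_mul_of_pos_left hF2 ha2
    _ ≤ Q^(t+1) * (Q^(m'+t+2)-1) * (Q * B) := by
        apply mul_le_mul_of_nonneg_right hF1
        positivity
    _ = Q * (Q^(t+1) * (Q^(m'+t+2)-1)) * B := by ring


theorem gauss_binom_ineq (n k q : ℕ) (hq : 2 ≤ q) (hk : 2 ≤ k) (hn : 2 * k < n) :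
    q ^ (k * (k - 1)) * gaussBinom q (n - k - 1) (k - 1) >
      q ^ (n - 1 - k) * gaussBinom q (n - 2) (k - 2) := by
  obtain ⟨t, rfl⟩ : ∃ t, k = t + 2 := ⟨k - 2, by omega⟩
  obtain ⟨m', rfl⟩ : ∃ m', n = m' + 2 * t + 5 := ⟨n - (2 * t + 5), by omega⟩
  rw [show (t+2) * (t+2-1) = (t+2)*(t+1) from by norm_num,
      show m' + 2*t + 5 - (t+2) - 1 = m' + t + 2 from by omega,
      show t + 2 - 1 = t + 1 from by omega,
      show m' + 2*t + 5 - 1 - (t+2) = m' + t + 2 from by omega,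
      show m' + 2*t + 5 - 2 = m' + 2*t + 3 from by omega,
      show t + 2 - 2 = t from by omega]
  have hQ : (2:ℚ) ≤ (q:ℚ) := by exact_mod_cast hq
  have key : ((q:ℚ)) ^ (m'+t+2) * (gaussBinom q (m'+2*t+3) t : ℚ)
      < (q:ℚ) ^ ((t+2)*(t+1)) * (gaussBinom q (m'+t+2) (t+1) : ℚ) := by
    have hD := D_pos q hq (t+1)
    rw [← mul_lt_mul_iff_of_pos_right hD]
    have hg1 : (gaussBinom q (m'+t+2) (t+1) : ℚ) * ∏ i ∈ range (t+1), ((q:ℚ)^(i+1) - 1)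
        = ∏ i ∈ range (t+1), ((q:ℚ)^(m'+i+2) - 1) := by
      rw [gauss_prod q hq (m'+t+2) (m'+1) (t+1) (by omega)]
      apply prod_congr rfl
      intro i _
      congr 2
      omega
    have hg2 : (gaussBinom q (m'+2*t+3) t : ℚ) * ∏ i ∈ range t, ((q:ℚ)^(i+1) - 1)
        = ∏ i ∈ range t, ((q:ℚ)^(m'+t+i+4) - 1) := by
      rw [gauss_prod q hq (m'+2*t+3) (m'+t+3) t (by omega)]
      apply prod_congr rfl
      intro i _
      congr 2
      omega
    calc (q:ℚ) ^ (m'+t+2) * (gaussBinom q (m'+2*t+3) t : ℚ)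
          * ∏ i ∈ range (t+1), ((q:ℚ)^(i+1) - 1)
        = (q:ℚ) ^ (m'+t+2) * ((q:ℚ)^(t+1) - 1)
          * ((gaussBinom q (m'+2*t+3) t : ℚ) * ∏ i ∈ range t, ((q:ℚ)^(i+1) - 1)) := by
          rw [prod_range_succ]; ring
      _ = (q:ℚ) ^ (m'+t+2) * ((q:ℚ)^(t+1) - 1) * ∏ i ∈ range t, ((q:ℚ)^(m'+t+i+4) - 1) := by
          rw [hg2]
      _ < (q:ℚ) ^ ((t+2)*(t+1)) * ∏ i ∈ range (t+1), ((q:ℚ)^(m'+i+2) - 1) :=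
          final (q:ℚ) hQ t m'
      _ = (q:ℚ) ^ ((t+2)*(t+1)) * (gaussBinom q (m'+t+2) (t+1) : ℚ)
          * ∏ i ∈ range (t+1), ((q:ℚ)^(i+1) - 1) := by rw [mul_assoc, hg1]
  exact_mod_cast key
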